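/- Let $\{p_n\}$ be a $W$-Sheffer sequence with parameters $(\alpha,\beta)$, so $\sum_n p_n(x)y^n/w_n = \alpha(y)W(x\beta(y))$. Then $\alpha(y)=\sum_n p_n(0)y^n/w_n$, and if $T_{h,W}(p_n/w_n)(x) = \sum_{k=0}^n \frac{d_{n-k}(h) p_k(x)}{w_{n-k}w_k}$, then $\sum_l d_l(h) y^l / w_l = W(h\beta(y))$. -/

import Mathlib

open Polynomial

/-- For a `W`-Sheffer sequence with `∑ₙ pₙ(x) yⁿ/wₙ = α(y) W(xβ(y))`:
`α(y) = ∑ₙ pₙ(0) yⁿ/wₙ`, and the series of translation coefficients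
`∑ₗ dₗ(h) yˡ/wₗ` equals `W(hβ(y))` (both equalities stated coefficientwise). -/
theorem stmt8 {F : Type*} [Field F] (w : ℕ → F) (hw0 : w 0 = 1)
    (hw : ∀ n, w n ≠ 0)
    (p : ℕ → F[X]) (hp : ∀ n, (p n).degree = n)
    -- the parameters `(α, β)` of the Sheffer sequence:
    (α β : PowerSeries F)
    (hα : PowerSeries.constantCoeff α ≠ 0)
    (hβ0 : PowerSeries.coeff (R := F) 0 β = 0) (hβ1 : PowerSeries.coeff (R := F) 1 β ≠ 0)
    -- `∑ₙ pₙ(x) yⁿ/wₙ = α(y) W(xβ(y))`, coefficientwise in `y`: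
    (hgen : ∀ n, (w n)⁻¹ • p n =
      ∑ k ∈ Finset.range (n + 1),
        (PowerSeries.coeff (R := F) n (α * β ^ k) / w k) • (X : F[X]) ^ k)
    -- the `W`-translations
    (T : F → F[X] →ₗ[F] F[X])
    (hT : ∀ (h : F) (n : ℕ), T h (X ^ n) =
      ∑ k ∈ Finset.range (n + 1),
        (w n * h ^ (n - k) / (w (n - k) * w k)) • (X : F[X]) ^ k)
    -- the coefficients `dₗ` of the translations in the basis `{pₖ}`:
    -- `T h (pₙ/wₙ) = ∑_{k ≤ n} d_{n-k}(h) pₖ/(w_{n-k} wₖ)`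
    (d : ℕ → F[X])
    (hd : ∀ (h : F) (n : ℕ), T h (p n) =
      ∑ k ∈ Finset.range (n + 1),
        (w n * (d (n - k)).eval h / (w (n - k) * w k)) • p k) :
    -- conclusion (1): `α(y) = ∑ₙ pₙ(0) yⁿ/wₙ`
    (α = PowerSeries.mk fun n => (p n).eval 0 / w n) ∧
    -- conclusion (2): `∑ₗ dₗ(h) yˡ/wₗ = W(hβ(y))`, coefficientwise in `y`
    (∀ (h : F) (n : ℕ), (d n).eval h / w n =
      ∑ l ∈ Finset.range (n + 1), h ^ l / w l * PowerSeries.coeff (R := F) n (β ^ l)) := by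
  have h1 : ∀ n, PowerSeries.coeff (R := F) n α = (p n).eval 0 / w n := by
    intro n
    have e := congrArg (Polynomial.eval 0) (hgen n)
    simp only [Polynomial.eval_smul, Polynomial.eval_finset_sum, Polynomial.eval_pow,
      Polynomial.eval_X, smul_eq_mul] at e
    rw [Finset.sum_eq_single 0 (by intro b _ hb; simp [zero_pow hb]) (by simp)] at e
    simp [hw0] at e
    rw [← e, inv_mul_eq_div]
  have pk0 : ∀ k, (p k).coeff 0 = PowerSeries.coeff (R := F) k α * w k := by
    intro k
    rw [Polynomial.coeff_zero_eq_eval_zero, h1, div_mul_cancel₀ _ (hw k)]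
  have hβpow : ∀ k m : ℕ, m < k → PowerSeries.coeff (R := F) m (β ^ k) = 0 := by
    intro k m hm
    refine PowerSeries.X_pow_dvd_iff.1 ?_ m hm
    refine pow_dvd_pow_of_dvd (PowerSeries.X_dvd_iff.2 ?_) k
    rw [← PowerSeries.coeff_zero_eq_constantCoeff_apply]; exact hβ0
  refine ⟨by ext n; rw [PowerSeries.coeff_mk, h1], ?_⟩
  intro h
  set D : ℕ → F := fun m => (d m).eval h / w m with hD
  set S : ℕ → F := fun m => ∑ l ∈ Finset.range (m + 1),
      h ^ l / w l * PowerSeries.coeff (R := F) m (β ^ l) with hS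
  suffices hDS : ∀ n, D n = S n by intro n; exact hDS n
  have key : ∀ n, ∑ k ∈ Finset.range (n + 1), PowerSeries.coeff (R := F) k α * D (n - k)
      = ∑ k ∈ Finset.range (n + 1), PowerSeries.coeff (R := F) k α * S (n - k) := by
    intro n
    have e1 := congrArg (T h) (hgen n)
    simp only [map_smul, map_sum, hd, hT] at e1
    have e2 := congrArg (fun q : F[X] => q.coeff 0) e1
    simp only [Polynomial.coeff_smul, Polynomial.finset_sum_coeff, smul_eq_mul,
      Polynomial.coeff_X_pow] at e2
    -- e2 : (w n)⁻¹ * ∑ k, (w n * (d (n-k)).eval h / (w (n-k) * w k)) * (p k).coeff 0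
    --    = ∑ k, (coeff n (α β^k)/w k) * ∑ j, (w k * h^(k-j)/(w (k-j)*w j)) * (if 0 = j then 1 else 0)
    have lhs_eq : ((w n)⁻¹ * ∑ k ∈ Finset.range (n + 1),
          w n * (d (n - k)).eval h / (w (n - k) * w k) * (p k).coeff 0)
        = ∑ k ∈ Finset.range (n + 1), PowerSeries.coeff (R := F) k α * D (n - k) := by
      rw [Finset.mul_sum]
      refine Finset.sum_congr rfl fun k _ => ?_
      rw [pk0, hD]
      have hq : w n * (d (n - k)).eval h / (w (n - k) * w k) * (PowerSeries.coeff (R := F) k α * w k)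
          = w n * (PowerSeries.coeff (R := F) k α * ((d (n - k)).eval h / w (n - k))) := by
        field_simp
        rw [div_eq_div_iff (mul_ne_zero (hw (n - k)) (hw k)) (hw (n - k))]; ring
      rw [hq, inv_mul_cancel_left₀ (hw n)]
    have rhs_eq : (∑ k ∈ Finset.range (n + 1), PowerSeries.coeff (R := F) n (α * β ^ k) / w k *
          ∑ j ∈ Finset.range (k + 1),
            w k * h ^ (k - j) / (w (k - j) * w j) * (if (0:ℕ) = j then 1 else 0))
        = ∑ k ∈ Finset.range (n + 1), PowerSeries.coeff (R := F) n (α * β ^ k) * (h ^ k / w k) := by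
      refine Finset.sum_congr rfl fun k _ => ?_
      rw [Finset.sum_eq_single 0 (by intro j _ hj; simp [Ne.symm hj]) (by simp)]
      simp only [Nat.sub_zero, hw0, if_pos rfl, mul_one]
      field_simp
      simp
    rw [lhs_eq, rhs_eq] at e2
    rw [e2]
    calc ∑ k ∈ Finset.range (n + 1), PowerSeries.coeff (R := F) n (α * β ^ k) * (h ^ k / w k)
        = ∑ k ∈ Finset.range (n + 1), (∑ i ∈ Finset.range (n + 1),
            PowerSeries.coeff (R := F) i α * PowerSeries.coeff (R := F) (n - i) (β ^ k)) * (h ^ k / w k) := by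
          refine Finset.sum_congr rfl fun k _ => ?_
          rw [PowerSeries.coeff_mul, Finset.Nat.sum_antidiagonal_eq_sum_range_succ_mk]
      _ = ∑ i ∈ Finset.range (n + 1), ∑ k ∈ Finset.range (n + 1),
            PowerSeries.coeff (R := F) i α * PowerSeries.coeff (R := F) (n - i) (β ^ k) * (h ^ k / w k) := by
          simp only [Finset.sum_mul]; exact Finset.sum_comm
      _ = ∑ i ∈ Finset.range (n + 1), PowerSeries.coeff (R := F) i α *
            ∑ k ∈ Finset.range (n + 1), h ^ k / w k * PowerSeries.coeff (R := F) (n - i) (β ^ k) := by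
          refine Finset.sum_congr rfl fun i _ => ?_
          rw [Finset.mul_sum]; exact Finset.sum_congr rfl fun k _ => by ring
      _ = ∑ i ∈ Finset.range (n + 1), PowerSeries.coeff (R := F) i α * S (n - i) := by
          refine Finset.sum_congr rfl fun i hi => ?_
          congr 1
          simp only [hS]
          symm
          refine Finset.sum_subset (Finset.range_subset_range.2 (by
            have := Finset.mem_range.1 hi; omega)) ?_
          intro k hk hk2
          have hlt : n - i < k := by
            simp only [Finset.mem_range] at hk hk2; omega
          rw [hβpow _ _ hlt, mul_zero]
  intro n
  induction n using Nat.strong_induction_on with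
  | _ n ih =>
    have hc0 : PowerSeries.coeff (R := F) 0 α ≠ 0 := by
      rwa [PowerSeries.coeff_zero_eq_constantCoeff_apply]
    have hk := key n
    rw [Finset.sum_range_succ', Finset.sum_range_succ'] at hk
    simp only [Nat.sub_zero] at hk
    have tail : ∑ i ∈ Finset.range n, PowerSeries.coeff (R := F) (i + 1) α * D (n - (i + 1))
        = ∑ i ∈ Finset.range n, PowerSeries.coeff (R := F) (i + 1) α * S (n - (i + 1)) := by
      refine Finset.sum_congr rfl fun i hi => ?_
      have := Finset.mem_range.1 hi; rw [ih _ (by omega)]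
    have : PowerSeries.coeff (R := F) 0 α * D n = PowerSeries.coeff (R := F) 0 α * S n := by
      rw [tail] at hk; exact add_left_cancel hk
    exact mul_left_cancel₀ hc0 this
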